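/- Let h be a monic divisor of x^M − 1 in F[x] and let p be a monic irreducible divisor of x^{2n} − 1. Then p divides h(x^ℓ) if and only if the reciprocal polynomial p* divides h*(x^ℓ), where h* is the reciprocal polynomial of h. -/
import Mathlib


open Polynomial

/-- The reciprocal polynomial `p*(x) = p(0)⁻¹ · x^(deg p) · p(1/x)` of `p`. -/
noncomputable def recip {F : Type*} [Field F] (p : F[X]) : F[X] :=
  C (p.coeff 0)⁻¹ * p.reverse

lemma my_reverse_reverse {F : Type*} [Field F] {p : F[X]} (hp : p.coeff 0 ≠ 0) :
    p.reverse.reverse = p := by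
  have h0 : p.natTrailingDegree = 0 := natTrailingDegree_eq_zero.mpr (Or.inr hp)
  have hd : p.reverse.natDegree = p.natDegree := by
    rw [reverse_natDegree, h0, Nat.sub_zero]
  ext n
  rw [coeff_reverse, coeff_reverse, hd, revAt_invol]

lemma dvd_reverse_iff {F : Type*} [Field F] {p g : F[X]} (hp : p.coeff 0 ≠ 0)
    (hg : g.coeff 0 ≠ 0) : p ∣ g ↔ p.reverse ∣ g.reverse := by
  constructor
  · rintro ⟨c, rfl⟩
    exact ⟨c.reverse, reverse_mul_of_domain p c⟩
  · rintro ⟨c, hc⟩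
    have h2 : g.reverse.reverse = p.reverse.reverse * c.reverse := by
      rw [hc, reverse_mul_of_domain]
    rw [my_reverse_reverse hp, my_reverse_reverse hg] at h2
    exact ⟨c.reverse, h2⟩

lemma reverse_expand {F : Type*} [Field F] (ℓ : ℕ) (hℓ : 0 < ℓ) (f : F[X])
    (h0 : f.coeff 0 ≠ 0) :
    (expand F ℓ f).reverse = expand F ℓ f.reverse := by
  have ht : f.natTrailingDegree = 0 := natTrailingDegree_eq_zero.mpr (Or.inr h0)
  have hde : (expand F ℓ f).natDegree = f.natDegree * ℓ := natDegree_expand ℓ f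
  have hdr : f.reverse.natDegree = f.natDegree := by
    rw [reverse_natDegree, ht, Nat.sub_zero]
  ext n
  rw [coeff_reverse, coeff_expand hℓ, coeff_expand hℓ, hde]
  by_cases hn : n ≤ f.natDegree * ℓ
  · rw [revAt_le hn]
    by_cases hdvd : ℓ ∣ n
    · have h1 : ℓ ∣ f.natDegree * ℓ - n := Nat.dvd_sub (dvd_mul_left ℓ f.natDegree) hdvd
      rw [if_pos h1, if_pos hdvd, coeff_reverse]
      congr 1
      obtain ⟨k, rfl⟩ := hdvd
      have hk : k ≤ f.natDegree := by
        rw [mul_comm ℓ k] at hn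
        exact Nat.le_of_mul_le_mul_right hn hℓ
      have e1 : f.natDegree * ℓ - ℓ * k = ℓ * (f.natDegree - k) := by
        rw [Nat.mul_sub, mul_comm]
      rw [e1, Nat.mul_div_cancel_left _ hℓ, Nat.mul_div_cancel_left _ hℓ, revAt_le hk]
    · have h1 : ¬ ℓ ∣ f.natDegree * ℓ - n := by
        intro hc
        apply hdvd
        have h2 := Nat.dvd_sub (dvd_mul_left ℓ f.natDegree) hc
        rwa [Nat.sub_sub_self hn] at h2
      rw [if_neg h1, if_neg hdvd]
  · push_neg at hn
    rw [revAt_eq_self_of_lt hn]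
    by_cases hdvd : ℓ ∣ n
    · rw [if_pos hdvd, if_pos hdvd, coeff_reverse]
      obtain ⟨k, rfl⟩ := hdvd
      have hk : f.natDegree < k := by
        by_contra hc
        push_neg at hc
        have h2 := Nat.mul_le_mul_left ℓ hc
        rw [mul_comm f.natDegree ℓ] at hn
        omega
      rw [Nat.mul_div_cancel_left _ hℓ, revAt_eq_self_of_lt hk]
    · rw [if_neg hdvd, if_neg hdvd]

theorem stmt_8 {F : Type*} [Field F] {n ℓ M : ℕ} (hn : 1 ≤ n)
    (hchar : ((2 * n : ℕ) : F) ≠ 0)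
    (hℓpos : 0 < ℓ) (hℓdvd : ℓ ∣ 2 * n) (hM : M = 2 * n / ℓ)
    (h : F[X]) (hmonic : h.Monic) (hdvd : h ∣ X ^ M - 1)
    (p : F[X]) (hpmonic : p.Monic) (hpirr : Irreducible p)
    (hpdvd : p ∣ X ^ (2 * n) - 1) :
    p ∣ h.comp (X ^ ℓ) ↔ recip p ∣ (recip h).comp (X ^ ℓ) := by
  have h2n : 0 < 2 * n := by omega
  have hMpos : 0 < M := by
    rw [hM]; exact Nat.div_pos (Nat.le_of_dvd h2n hℓdvd) hℓpos
  -- constant coefficients are nonzero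
  have hXM : ((X : F[X]) ^ M - 1).coeff 0 ≠ 0 := by
    simp [coeff_X_pow, hMpos.ne]
  have hX2n : ((X : F[X]) ^ (2 * n) - 1).coeff 0 ≠ 0 := by
    have h3 : (0:ℕ) ≠ 2 * n := by omega
    simp [coeff_X_pow, h3]
  have hp0 : p.coeff 0 ≠ 0 := by
    obtain ⟨c, hc⟩ := hpdvd
    intro hc0
    apply hX2n
    rw [hc, mul_coeff_zero, hc0, zero_mul]
  have hh0 : h.coeff 0 ≠ 0 := by
    obtain ⟨c, hc⟩ := hdvd
    intro hc0
    apply hXM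
    rw [hc, mul_coeff_zero, hc0, zero_mul]
  -- g = h.comp (X^ℓ) = expand F ℓ h
  have hcompeq : h.comp (X ^ ℓ) = expand F ℓ h := (expand_eq_comp_X_pow ℓ).symm
  have hg0 : (h.comp (X ^ ℓ)).coeff 0 ≠ 0 := by
    rw [hcompeq, coeff_expand hℓpos, if_pos (dvd_zero ℓ), Nat.zero_div]
    exact hh0
  -- units
  have hup : IsUnit (C (p.coeff 0)⁻¹) := isUnit_C.mpr (isUnit_iff_ne_zero.mpr (inv_ne_zero hp0))
  have huh : IsUnit (C (h.coeff 0)⁻¹) := isUnit_C.mpr (isUnit_iff_ne_zero.mpr (inv_ne_zero hh0))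
  have key : (recip h).comp (X ^ ℓ) = C (h.coeff 0)⁻¹ * (h.comp (X ^ ℓ)).reverse := by
    rw [recip, mul_comp, C_comp, hcompeq,
      show h.reverse.comp (X ^ ℓ) = expand F ℓ h.reverse from (expand_eq_comp_X_pow ℓ).symm,
      reverse_expand ℓ hℓpos h hh0]
  rw [dvd_reverse_iff hp0 hg0, key, recip, hup.mul_left_dvd, huh.dvd_mul_left]
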